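/- For every left preferred Gauss code w on n letters, the n-th iterate of shift^LP satisfies (shift^LP)^n(w) = w; that is, shift^LP is a bijection of the set of left preferred Gauss codes on n letters whose n-th power is the identity. -/

import Mathlib

/-- A Gauss code on `n` letters: a bijection from the `2*n` positions to
letters paired with a side (`false` = L, `true` = R). -/
abbrev GaussCode (n : ℕ) := Fin (2 * n) ≃ Fin n × Bool

instance (n : ℕ) [NeZero n] : NeZero (2 * n) := ⟨by have := NeZero.ne n; omega⟩

namespace GaussCode

variable {n : ℕ}

/-- `π_*(w)`: relabel the letters by the permutation `π`. -/
def permAct (π : Equiv.Perm (Fin n)) (w : GaussCode n) : GaussCode n :=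
  w.trans (π.prodCongr (Equiv.refl Bool))

open Fin.NatCast in
/-- `shift[m](w)`: the code whose entry at position `i` is the entry of `w` at
position `i + m` (mod `2n`). -/
def shift [NeZero n] (m : ℕ) (w : GaussCode n) : GaussCode n :=
  (Equiv.addRight ((m : Fin (2 * n)))).trans w

/-- `rev(w)`: the code whose entry at position `i` is the entry of `w` at
position `2n - 1 - i`. -/
def rev (w : GaussCode n) : GaussCode n :=
  (Fin.revPerm).trans w

/-- A Gauss code is left preferred if its `L`-entries appear in the order
`(1,L), (2,L), …, (n,L)` and its entry at position `0` is `(1,L)`. -/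
def IsLeftPreferred [NeZero n] (w : GaussCode n) : Prop :=
  StrictMono (fun j : Fin n => w.symm (j, false)) ∧ w 0 = (0, false)

/-- `proj^LP(w)`: relabel letters in the order of appearance of their `L`-entries,
then rotate so that `(1,L)` is at position `0`. -/
def projLP [NeZero n] (w : GaussCode n) : GaussCode n :=
  let π : Equiv.Perm (Fin n) := (Tuple.sort (fun j : Fin n => w.symm (j, false)))⁻¹
  let w' := permAct π w
  shift ((w'.symm ((0 : Fin n), false)).val) w'

/-- `shift^LP(w) := proj^LP(shift[1](w))`. -/
def shiftLP [NeZero n] (w : GaussCode n) : GaussCode n :=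
  projLP (shift 1 w)

/-- `rev^LP(w) := proj^LP(rev(w))`. -/
def revLP [NeZero n] (w : GaussCode n) : GaussCode n :=
  projLP (rev w)

/-- The value of an entry in the order `(1,L) < (1,R) < (2,L) < (2,R) < …`. -/
def entryKey (e : Fin n × Bool) : ℕ :=
  2 * e.1.val + (if e.2 then 1 else 0)

/-- Lexicographic (strict) order on Gauss codes, comparing entries position by
position in the order `(1,L) < (1,R) < (2,L) < (2,R) < …`. -/
def lexLt (w w' : GaussCode n) : Prop :=
  ∃ i : Fin (2 * n), (∀ k, k < i → w k = w' k) ∧ entryKey (w i) < entryKey (w' i)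

/-- Lexicographic order on Gauss codes. -/
def lexLe (w w' : GaussCode n) : Prop :=
  w = w' ∨ lexLt w w'

/-- A left preferred Gauss code is left canonical if it is the smallest element
of its `shift^LP`-orbit `{w, shift^LP(w), …, (shift^LP)^{n-1}(w)}`. -/
def IsLeftCanonical [NeZero n] (w : GaussCode n) : Prop :=
  IsLeftPreferred w ∧ ∀ k < n, lexLe w (shiftLP^[k] w)

/-- `proj^LC(w)`: the smallest element of the `shift^LP`-orbit of `proj^LP(w)`. -/
noncomputable def projLC [NeZero n] (w : GaussCode n) : GaussCode n :=
  letI := Classical.propDecidable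
  if h : ∃ v : GaussCode n, (∃ k < n, v = shiftLP^[k] (projLP w)) ∧
      ∀ k < n, lexLe v (shiftLP^[k] (projLP w))
  then h.choose else projLP w

/-- `rev^LC(w) := proj^LC(rev(w))`. -/
noncomputable def revLC [NeZero n] (w : GaussCode n) : GaussCode n :=
  projLC (rev w)

/-- Oriented equivalence of Gauss codes: `w' = shift[m](π_*(w))` for some
permutation `π` and integer `m`. -/
def OrientedEquiv [NeZero n] (w w' : GaussCode n) : Prop :=
  ∃ (π : Equiv.Perm (Fin n)) (m : ℕ), w' = shift m (permAct π w)

/-- Unoriented equivalence: `w` is orientedly equivalent to `w'` or to `rev(w')`. -/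
def UnorientedEquiv [NeZero n] (w w' : GaussCode n) : Prop :=
  OrientedEquiv w w' ∨ OrientedEquiv w (rev w')

/-- A Gauss code is 1-reducible if two cyclically adjacent entries share the same letter. -/
def OneReducible [NeZero n] (w : GaussCode n) : Prop :=
  ∃ i : Fin (2 * n), (w i).1 = (w (i + 1)).1

/-- A Gauss code is 2-reducible (cyclically, with `L = false`, `R = true`). -/
def TwoReducible [NeZero n] (w : GaussCode n) : Prop :=
  ∃ (i i' : Fin (2 * n)) (j k : Fin n), j ≠ k ∧
    ((w i = (j, false) ∧ w (i + 1) = (k, true) ∧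
        w i' = (j, true) ∧ w (i' + 1) = (k, false)) ∨
     (w i = (j, false) ∧ w (i + 1) = (k, true) ∧
        w i' = (k, false) ∧ w (i' + 1) = (j, true)) ∨
     (w i = (j, true) ∧ w (i + 1) = (k, false) ∧
        w i' = (k, true) ∧ w (i' + 1) = (j, false)))

/-- A Gauss code is minimal if it is neither 1-reducible nor 2-reducible. -/
def IsMinimal [NeZero n] (w : GaussCode n) : Prop :=
  ¬ OneReducible w ∧ ¬ TwoReducible w

/-- `σ_w`: the involution of positions sending each position to the unique other
position carrying the same letter. -/
def sigmaMap (w : GaussCode n) : Fin (2 * n) → Fin (2 * n) :=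
  fun i => w.symm ((w i).1, !(w i).2)

/-- `h_w`: the side (`false` = L, `true` = R) of the entry at each position. -/
def hMap (w : GaussCode n) : Fin (2 * n) → Bool :=
  fun i => (w i).2

end GaussCode

-- === auxiliary development ===
namespace GaussCode

variable {n : ℕ} [NeZero n]
set_option linter.unusedSectionVars false

/-- shift with a `Fin` parameter. -/
def sshift (m : Fin (2 * n)) (w : GaussCode n) : GaussCode n :=
  (Equiv.addRight m).trans w

open Fin.NatCast in
lemma shift_eq_sshift (m : ℕ) (w : GaussCode n) : shift m w = sshift (m : Fin (2*n)) w := rfl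

@[simp] lemma sshift_apply (m : Fin (2*n)) (w : GaussCode n) (i : Fin (2*n)) :
    sshift m w i = w (i + m) := rfl

@[simp] lemma sshift_symm_apply (m : Fin (2*n)) (w : GaussCode n) (a : Fin n × Bool) :
    (sshift m w).symm a = w.symm a - m := by
  simp [sshift, Equiv.symm_trans_apply, sub_eq_add_neg]

@[simp] lemma permAct_apply (π : Equiv.Perm (Fin n)) (w : GaussCode n) (i : Fin (2*n)) :
    permAct π w i = (π (w i).1, (w i).2) := rfl

@[simp] lemma permAct_symm_apply (π : Equiv.Perm (Fin n)) (w : GaussCode n) (j : Fin n) (s : Bool) :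
    (permAct π w).symm (j, s) = w.symm (π⁻¹ j, s) := rfl

lemma sshift_sshift (a b : Fin (2*n)) (w : GaussCode n) :
    sshift a (sshift b w) = sshift (b + a) w := by
  ext i : 1
  show w (i + a + b) = w (i + (b + a))
  rw [add_assoc, add_comm a b]

lemma sshift_zero (w : GaussCode n) : sshift 0 w = w := by
  ext i : 1
  show w (i + 0) = w i
  rw [add_zero]

lemma permAct_sshift (π : Equiv.Perm (Fin n)) (m : Fin (2*n)) (w : GaussCode n) :
    permAct π (sshift m w) = sshift m (permAct π w) := rfl

lemma permAct_permAct (π ρ : Equiv.Perm (Fin n)) (w : GaussCode n) :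
    permAct π (permAct ρ w) = permAct (ρ.trans π) w := rfl

lemma permAct_refl (w : GaussCode n) : permAct (Equiv.refl _) w = w := by
  ext i : 1
  simp [permAct]

lemma sort_eq_of_strictMono {α : Type*} [LinearOrder α] {f : Fin n → α} {σ : Equiv.Perm (Fin n)}
    (h : StrictMono (f ∘ σ)) : Tuple.sort f = σ := by
  symm
  rw [Tuple.eq_sort_iff]
  exact ⟨h.monotone, fun i j hij hf => absurd hf (ne_of_lt (h hij))⟩

end GaussCode

namespace GaussCode

variable {n : ℕ} [NeZero n]
set_option linter.unusedSectionVars false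

lemma mod_helper (m p : ℕ) (h1 : 1 ≤ p) (h2 : p < m) : (m - 1 + p) % m = p - 1 := by
  have h : m - 1 + p = (p - 1) + m := by omega
  rw [h, Nat.add_mod_right]
  exact Nat.mod_eq_of_lt (by omega)

lemma symm_zero (w : GaussCode n) (hw : IsLeftPreferred w) : w.symm ((0 : Fin n), false) = 0 := by
  rw [← hw.2, Equiv.symm_apply_apply]

lemma subRight_inv_apply (a x : Fin n) : (Equiv.subRight a)⁻¹ x = x + a := rfl

lemma addRight_inv_eq : (Equiv.addRight (1 : Fin n))⁻¹ = Equiv.subRight (1 : Fin n) :=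
  Equiv.ext fun x => by simp [Equiv.Perm.inv_def, sub_eq_add_neg]

lemma subRight_zero : Equiv.subRight (0 : Fin n) = Equiv.refl _ :=
  Equiv.ext fun x => sub_zero x

variable {i j : Fin n}

lemma key_mono (w : GaussCode n) (hw : IsLeftPreferred w) (hij : i < j) :
    w.symm (i + 1, false) - w.symm (1, false) < w.symm (j + 1, false) - w.symm (1, false) := by
  have h0 : w.symm ((0 : Fin n), false) = 0 := symm_zero w hw
  have hn : i.val < j.val := hij
  have hjn : j.val < n := j.isLt
  have h1n : ((1 : Fin n) : ℕ) = 1 := by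
    rw [Fin.val_one']; exact Nat.mod_eq_of_lt (by omega)
  have hi1 : ((i + 1 : Fin n) : ℕ) = i.val + 1 := by
    rw [Fin.add_def]; simp only [h1n]; exact Nat.mod_eq_of_lt (by omega)
  have hp1 : (0 : Fin (2*n)) < w.symm ((1 : Fin n), false) := by
    have h01 : (0 : Fin n) < 1 := by rw [Fin.lt_def, Fin.val_zero, h1n]; omega
    simpa only [h0] using hw.1 h01
  have hple : w.symm ((1 : Fin n), false) ≤ w.symm (i + 1, false) := by
    have h1i : (1 : Fin n) ≤ i + 1 := by rw [Fin.le_def, h1n, hi1]; omega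
    exact (hw.1.monotone h1i :)
  have hubi : (w.symm (i + 1, false)).val < 2 * n := (w.symm (i + 1, false)).isLt
  have hub1 : (w.symm ((1 : Fin n), false)).val < 2 * n := (w.symm ((1 : Fin n), false)).isLt
  by_cases hj1 : j.val + 1 < n
  · have hj1' : ((j + 1 : Fin n) : ℕ) = j.val + 1 := by
      rw [Fin.add_def]; simp only [h1n]; exact Nat.mod_eq_of_lt hj1
    have hlt : w.symm (i + 1, false) < w.symm (j + 1, false) := by
      have : (i + 1 : Fin n) < j + 1 := by rw [Fin.lt_def, hi1, hj1']; omega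
      exact (hw.1 this :)
    fin_omega
  · have hj0 : (j + 1 : Fin n) = 0 := by
      apply Fin.ext
      rw [Fin.add_def]; simp only [h1n, Fin.val_zero]
      have : j.val + 1 = n := by omega
      rw [this, Nat.mod_self]
    rw [hj0, h0]
    fin_omega

lemma key_mono_one (w : GaussCode n) (hw : IsLeftPreferred w) (hij : i < j) :
    w.symm (i + 1, false) - 1 < w.symm (j + 1, false) - 1 := by
  have h0 : w.symm ((0 : Fin n), false) = 0 := symm_zero w hw
  have hn : i.val < j.val := hij
  have hjn : j.val < n := j.isLt
  have h1n : ((1 : Fin n) : ℕ) = 1 := by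
    rw [Fin.val_one']; exact Nat.mod_eq_of_lt (by omega)
  have hi1 : ((i + 1 : Fin n) : ℕ) = i.val + 1 := by
    rw [Fin.add_def]; simp only [h1n]; exact Nat.mod_eq_of_lt (by omega)
  have h12 : ((1 : Fin (2*n)) : ℕ) = 1 := by
    rw [Fin.val_one']; exact Nat.mod_eq_of_lt (by have := NeZero.ne n; omega)
  have hpi : (0 : Fin (2*n)) < w.symm (i + 1, false) := by
    have h0i : (0 : Fin n) < i + 1 := by rw [Fin.lt_def, Fin.val_zero, hi1]; omega
    simpa only [h0] using hw.1 h0i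
  have hubi : (w.symm (i + 1, false)).val < 2 * n := (w.symm (i + 1, false)).isLt
  by_cases hj1 : j.val + 1 < n
  · have hj1' : ((j + 1 : Fin n) : ℕ) = j.val + 1 := by
      rw [Fin.add_def]; simp only [h1n]; exact Nat.mod_eq_of_lt hj1
    have hlt : w.symm (i + 1, false) < w.symm (j + 1, false) := by
      have : (i + 1 : Fin n) < j + 1 := by rw [Fin.lt_def, hi1, hj1']; omega
      exact (hw.1 this :)
    fin_omega
  · have hj0 : (j + 1 : Fin n) = 0 := by
      apply Fin.ext
      rw [Fin.add_def]; simp only [h1n, Fin.val_zero]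
      have : j.val + 1 = n := by omega
      rw [this, Nat.mod_self]
    rw [hj0, h0]
    have hpi1 : 1 ≤ (w.symm (i + 1, false)).val := hpi
    simp only [Fin.lt_def, Fin.sub_def, h12, Fin.val_zero]
    rw [mod_helper _ _ hpi1 hubi, add_zero, Nat.mod_eq_of_lt (by omega)]
    omega

lemma sort_shift_one (w : GaussCode n) (hw : IsLeftPreferred w) :
    Tuple.sort (fun j : Fin n => (shift 1 w).symm (j, false)) = Equiv.addRight (1 : Fin n) := by
  apply sort_eq_of_strictMono
  intro i j hij
  simp only [Function.comp, Equiv.coe_addRight, shift_eq_sshift, Nat.cast_one, sshift_symm_apply]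
  exact key_mono_one w hw hij

lemma shiftLP_eq (w : GaussCode n) (hw : IsLeftPreferred w) :
    shiftLP w = sshift (w.symm ((1 : Fin n), false)) (permAct (Equiv.subRight (1 : Fin n)) w) := by
  have hsort := sort_shift_one w hw
  show projLP (shift 1 w) = _
  rw [projLP]
  simp only [hsort, addRight_inv_eq]
  rw [shift_eq_sshift 1, permAct_sshift, shift_eq_sshift, sshift_symm_apply,
    permAct_symm_apply, subRight_inv_apply, zero_add, Fin.cast_val_eq_self, sshift_sshift,
    add_sub_cancel]

lemma isLP_next (w : GaussCode n) (hw : IsLeftPreferred w) :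
    IsLeftPreferred (sshift (w.symm ((1 : Fin n), false)) (permAct (Equiv.subRight (1 : Fin n)) w)) := by
  constructor
  · intro i j hij
    simp only [sshift_symm_apply, permAct_symm_apply, subRight_inv_apply]
    exact key_mono w hw hij
  · show (permAct (Equiv.subRight (1 : Fin n)) w) (0 + w.symm (1, false)) = ((0 : Fin n), false)
    rw [zero_add, permAct_apply, Equiv.apply_symm_apply]
    simp [Equiv.subRight_apply]

open Fin.NatCast in
lemma iterate_eq (w : GaussCode n) (hw : IsLeftPreferred w) : ∀ k : ℕ,
    shiftLP^[k] w = sshift (w.symm (((k : Fin n)), false)) (permAct (Equiv.subRight ((k : Fin n))) w)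
    ∧ IsLeftPreferred (shiftLP^[k] w)
  | 0 => by
    constructor
    · simp only [Function.iterate_zero, id_eq, Nat.cast_zero]
      rw [symm_zero w hw, subRight_zero, permAct_refl, sshift_zero]
    · simpa using hw
  | (k + 1) => by
    obtain ⟨hk, hkLP⟩ := iterate_eq w hw k
    rw [Function.iterate_succ_apply']
    constructor
    · rw [shiftLP_eq _ hkLP, hk]
      rw [sshift_symm_apply, permAct_symm_apply, subRight_inv_apply]
      rw [permAct_sshift, permAct_permAct, sshift_sshift, add_sub_cancel]
      have hperm : (Equiv.subRight ((k : Fin n))).trans (Equiv.subRight (1 : Fin n))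
          = Equiv.subRight (((k + 1 : ℕ) : Fin n)) := by
        refine Equiv.ext fun x => ?_
        show x - (k : Fin n) - 1 = x - ((k + 1 : ℕ) : Fin n)
        rw [sub_sub, Nat.cast_add, Nat.cast_one]
      rw [hperm]
      congr 2
      rw [Nat.cast_add, Nat.cast_one, add_comm]
    · rw [shiftLP_eq _ hkLP]
      exact isLP_next _ hkLP

theorem main (w : GaussCode n) (hw : IsLeftPreferred w) :
    IsLeftPreferred (shiftLP w) ∧ shiftLP^[n] w = w := by
  constructor
  · simpa using (iterate_eq w hw 1).2
  · obtain ⟨hn, -⟩ := iterate_eq w hw n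
    rw [hn, Fin.natCast_self, symm_zero w hw, subRight_zero, permAct_refl, sshift_zero]

end GaussCode

open GaussCode in
/-- `shift^LP` maps left preferred Gauss codes to left preferred Gauss
codes and its `n`-th iterate is the identity on them. -/
theorem stmt3 (n : ℕ) [NeZero n] (w : GaussCode n) (hw : IsLeftPreferred w) :
    IsLeftPreferred (shiftLP w) ∧ shiftLP^[n] w = w :=
  GaussCode.main w hw
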